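/- arXiv:2006.16357 — 2 statements merged into one kernel-verified Lean document; each statement's English description precedes it below -/
import Mathlib

section
/- Let Y be a real random variable with conditional distribution given as an arbitrary probability measure, let τ ∈ (0,1), and let ρ_τ be the check function. Then any τ-quantile q of Y (i.e., P(Y ≤ q) ≥ τ and P(Y ≥ q) ≥ 1-τ) minimizes the function t ↦ E[ρ_τ(Y - t) - ρ_τ(Y)]. -/
open MeasureTheory

/-- The quantile check function `ρ_τ(x) = x (τ - 1{x < 0})`. -/
noncomputable def checkFun (τ x : ℝ) : ℝ := x * (τ - if x < 0 then 1 else 0)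

lemma checkFun_subgrad_le (τ : ℝ) (hτ : τ ∈ Set.Ioo (0 : ℝ) 1) (a b : ℝ) :
    (a - b) * (τ - if b ≤ 0 then 1 else 0) ≤ checkFun τ a - checkFun τ b := by
  obtain ⟨h0, h1⟩ := hτ
  unfold checkFun
  split_ifs <;> nlinarith

lemma checkFun_subgrad_lt (τ : ℝ) (hτ : τ ∈ Set.Ioo (0 : ℝ) 1) (a b : ℝ) :
    (a - b) * (τ - if b < 0 then 1 else 0) ≤ checkFun τ a - checkFun τ b := by
  obtain ⟨h0, h1⟩ := hτ
  unfold checkFun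
  split_ifs <;> nlinarith

/-- Any τ-quantile of the distribution μ of a real random variable minimizes
`t ↦ E[ρ_τ(Y - t) - ρ_τ(Y)]`. -/
theorem quantile_minimizes_expected_check_loss
    (μ : Measure ℝ) [IsProbabilityMeasure μ] (τ : ℝ) (hτ : τ ∈ Set.Ioo (0 : ℝ) 1)
    (q : ℝ)
    (hq1 : ENNReal.ofReal τ ≤ μ {y | y ≤ q})
    (hq2 : ENNReal.ofReal (1 - τ) ≤ μ {y | q ≤ y})
    (hInt : ∀ t : ℝ, Integrable (fun y => checkFun τ (y - t) - checkFun τ y) μ) :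
    ∀ t : ℝ,
      ∫ y, (checkFun τ (y - q) - checkFun τ y) ∂μ ≤
        ∫ y, (checkFun τ (y - t) - checkFun τ y) ∂μ := by
  obtain ⟨h0, h1⟩ := hτ
  intro t
  -- integrability of the difference
  have hDiff : Integrable (fun y => checkFun τ (y - t) - checkFun τ (y - q)) μ := by
    have h := (hInt t).sub (hInt q)
    exact h.congr (Filter.Eventually.of_forall fun y => by simp [Pi.sub_apply])
  have hsplit : ∫ y, (checkFun τ (y - t) - checkFun τ y) ∂μ
      - ∫ y, (checkFun τ (y - q) - checkFun τ y) ∂μ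
      = ∫ y, (checkFun τ (y - t) - checkFun τ (y - q)) ∂μ := by
    rw [← integral_sub (hInt t) (hInt q)]
    congr 1; funext y; ring
  suffices h : 0 ≤ ∫ y, (checkFun τ (y - t) - checkFun τ (y - q)) ∂μ by linarith [hsplit]
  rcases le_total t q with hle | hle
  · -- t ≤ q : use indicator of {y < q}
    set f : ℝ → ℝ := fun y => (q - t) * (τ - if y < q then 1 else 0) with hf
    have hfInt : Integrable f μ := by
      have hind : Integrable (fun y => if y < q then (1:ℝ) else 0) μ := by
        have he : (fun y => if y < q then (1:ℝ) else 0)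
            = (Set.Iio q).indicator (fun _ => (1:ℝ)) := by
          funext y; simp [Set.indicator, Set.mem_Iio]
        rw [he]
        exact (integrable_const 1).indicator measurableSet_Iio
      exact (((integrable_const τ).sub hind).const_mul _)
    have hmono : ∀ y, f y ≤ checkFun τ (y - t) - checkFun τ (y - q) := by
      intro y
      have h := checkFun_subgrad_lt τ ⟨h0, h1⟩ (y - t) (y - q)
      simp only [show (y - t) - (y - q) = q - t from by ring, sub_neg] at h
      exact h
    have hIle : ∫ y, f y ∂μ ≤ ∫ y, (checkFun τ (y - t) - checkFun τ (y - q)) ∂μ :=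
      integral_mono hfInt hDiff hmono
    -- compute ∫ f
    have hindval : ∫ y, (if y < q then (1:ℝ) else 0) ∂μ = (μ (Set.Iio q)).toReal := by
      have he : (fun y => if y < q then (1:ℝ) else 0)
          = (Set.Iio q).indicator (fun _ => (1:ℝ)) := by
        funext y; simp [Set.indicator, Set.mem_Iio]
      rw [he, integral_indicator_const (1:ℝ) measurableSet_Iio]
      simp
      rfl
    have hind : Integrable (fun y => if y < q then (1:ℝ) else 0) μ := by
      have he : (fun y => if y < q then (1:ℝ) else 0)
          = (Set.Iio q).indicator (fun _ => (1:ℝ)) := by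
        funext y; simp [Set.indicator, Set.mem_Iio]
      rw [he]
      exact (integrable_const 1).indicator measurableSet_Iio
    have hval : ∫ y, f y ∂μ = (q - t) * (τ - (μ (Set.Iio q)).toReal) := by
      rw [hf]
      rw [integral_const_mul, integral_sub (integrable_const τ) hind, hindval,
        integral_const]
      simp
    -- μ (Iio q) ≤ τ
    have hsum : μ (Set.Iio q) + μ (Set.Ici q) = 1 := by
      rw [← measure_union (Set.Iio_disjoint_Ici le_rfl) measurableSet_Ici,
        Set.Iio_union_Ici, measure_univ]
    have h2 : (1 : ℝ) - τ ≤ (μ (Set.Ici q)).toReal := by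
      have := ENNReal.toReal_mono (measure_ne_top μ _) hq2
      rwa [ENNReal.toReal_ofReal (by linarith)] at this
    have hμio : (μ (Set.Iio q)).toReal ≤ τ := by
      have h3 : (μ (Set.Iio q)).toReal + (μ (Set.Ici q)).toReal = 1 := by
        rw [← ENNReal.toReal_add (measure_ne_top μ _) (measure_ne_top μ _), hsum]
        simp
      linarith
    have : 0 ≤ ∫ y, f y ∂μ := by
      rw [hval]
      apply mul_nonneg (by linarith) (by linarith)
    linarith
  · -- q ≤ t : use indicator of {y ≤ q}
    set f : ℝ → ℝ := fun y => (q - t) * (τ - if y ≤ q then 1 else 0) with hf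
    have hind : Integrable (fun y => if y ≤ q then (1:ℝ) else 0) μ := by
      have he : (fun y => if y ≤ q then (1:ℝ) else 0)
          = (Set.Iic q).indicator (fun _ => (1:ℝ)) := by
        funext y; simp [Set.indicator, Set.mem_Iic]
      rw [he]
      exact (integrable_const 1).indicator measurableSet_Iic
    have hfInt : Integrable f μ := (((integrable_const τ).sub hind).const_mul _)
    have hmono : ∀ y, f y ≤ checkFun τ (y - t) - checkFun τ (y - q) := by
      intro y
      have h := checkFun_subgrad_le τ ⟨h0, h1⟩ (y - t) (y - q)
      simp only [show (y - t) - (y - q) = q - t from by ring, sub_nonpos] at h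
      exact h
    have hIle : ∫ y, f y ∂μ ≤ ∫ y, (checkFun τ (y - t) - checkFun τ (y - q)) ∂μ :=
      integral_mono hfInt hDiff hmono
    have hindval : ∫ y, (if y ≤ q then (1:ℝ) else 0) ∂μ = (μ (Set.Iic q)).toReal := by
      have he : (fun y => if y ≤ q then (1:ℝ) else 0)
          = (Set.Iic q).indicator (fun _ => (1:ℝ)) := by
        funext y; simp [Set.indicator, Set.mem_Iic]
      rw [he, integral_indicator_const (1:ℝ) measurableSet_Iic]
      simp
      rfl
    have hval : ∫ y, f y ∂μ = (q - t) * (τ - (μ (Set.Iic q)).toReal) := by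
      rw [hf]
      rw [integral_const_mul, integral_sub (integrable_const τ) hind, hindval,
        integral_const]
      simp
    have hμic : τ ≤ (μ (Set.Iic q)).toReal := by
      have := ENNReal.toReal_mono (measure_ne_top μ _) hq1
      rwa [ENNReal.toReal_ofReal (by linarith)] at this
    have : 0 ≤ ∫ y, f y ∂μ := by
      rw [hval]
      nlinarith
    linarith
end

section
/- Let ℓ : ℝ^d → ℝ be convex and suppose θ̂ minimizes ℓ over the affine subspace {θ : θ_j = 0 for j ∈ S^c}. If for every j ∈ S^c each element of the subgradient set of ℓ at θ̂ in the j-th coordinate is at most λ in absolute value, then θ̂ is a local minimizer of θ ↦ ℓ(θ) + λ Σ_{j∈S^c}|θ_j| over ℝ^d. -/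
open Matrix

/-- Existence of a subgradient of a convex function on `ℝ^d` at a constrained
minimizer over the subspace of vectors vanishing outside `S`, which vanishes on `S`. -/
lemma exists_subgradient_vanishing_on
    (d : ℕ) (ℓ : (Fin d → ℝ) → ℝ) (hconv : ConvexOn ℝ Set.univ ℓ)
    (S : Finset (Fin d)) (θhat : Fin d → ℝ)
    (hzero : ∀ j ∉ S, θhat j = 0)
    (hmin : ∀ θ : Fin d → ℝ, (∀ j ∉ S, θ j = 0) → ℓ θhat ≤ ℓ θ) :
    ∃ g : Fin d → ℝ, (∀ j ∈ S, g j = 0) ∧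
      (∀ φ : Fin d → ℝ, ℓ θhat + g ⬝ᵥ (φ - θhat) ≤ ℓ φ) := by
  have hcont : Continuous ℓ := by
    rw [← continuousOn_univ]
    exact hconv.continuousOn isOpen_univ
  set A : Set ((Fin d → ℝ) × ℝ) := {p | ℓ p.1 < p.2} with hA
  have hAopen : IsOpen A := isOpen_lt (hcont.comp continuous_fst) continuous_snd
  have hAconv : Convex ℝ A := by
    intro p hp q hq a b ha hb hab
    have hle := hconv.2 (Set.mem_univ p.1) (Set.mem_univ q.1) ha hb hab
    simp only [smul_eq_mul] at hle
    have hp' : ℓ p.1 < p.2 := hp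
    have hq' : ℓ q.1 < q.2 := hq
    simp only [hA, Set.mem_setOf_eq, Prod.fst_add, Prod.snd_add, Prod.smul_fst,
      Prod.smul_snd, smul_eq_mul]
    set m := min (p.2 - ℓ p.1) (q.2 - ℓ q.1) with hm
    have hmpos : 0 < m := lt_min (by linarith) (by linarith)
    have h1 : a * m ≤ a * (p.2 - ℓ p.1) :=
      mul_le_mul_of_nonneg_left (min_le_left _ _) ha
    have h2 : b * m ≤ b * (q.2 - ℓ q.1) :=
      mul_le_mul_of_nonneg_left (min_le_right _ _) hb
    have h3 : a * m + b * m = m := by rw [← add_mul, hab, one_mul]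
    nlinarith
  set B : Set ((Fin d → ℝ) × ℝ) :=
    {p | (∀ j ∉ S, p.1 j = 0) ∧ p.2 = ℓ θhat} with hBdef
  have hBconv : Convex ℝ B := by
    rintro p ⟨hp1, hp2⟩ q ⟨hq1, hq2⟩ a b _ _ hab
    constructor
    · intro j hj
      simp [Prod.fst_add, hp1 j hj, hq1 j hj]
    · simp [Prod.snd_add, hp2, hq2, smul_eq_mul, ← add_mul, hab]
  have disj : Disjoint A B := by
    rw [Set.disjoint_left]
    rintro p hpA ⟨hp1, hp2⟩
    have := hmin p.1 hp1
    rw [hA] at hpA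
    simp only [Set.mem_setOf_eq] at hpA
    rw [hp2] at hpA
    linarith
  obtain ⟨f, u, hfA, hfB⟩ := geometric_hahn_banach_open hAconv hAopen hBconv disj
  set F : (Fin d → ℝ) →L[ℝ] ℝ := f.comp (ContinuousLinearMap.inl ℝ (Fin d → ℝ) ℝ) with hF
  set c : ℝ := f (0, 1) with hc
  have hsplit : ∀ (x : Fin d → ℝ) (t : ℝ), f (x, t) = F x + t * c := by
    intro x t
    have hxt : (x, t) = (x, (0 : ℝ)) + t • ((0 : Fin d → ℝ), (1 : ℝ)) := by
      simp [Prod.ext_iff]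
    rw [hxt, map_add, f.map_smul, smul_eq_mul]
    simp [hF, hc]
  have hθB : ((θhat, ℓ θhat) : (Fin d → ℝ) × ℝ) ∈ B := ⟨hzero, rfl⟩
  have hu : u ≤ F θhat + ℓ θhat * c := by
    have := hfB _ hθB
    rwa [hsplit] at this
  have hcneg : c < 0 := by
    have h1 : ((θhat, ℓ θhat + 1) : (Fin d → ℝ) × ℝ) ∈ A := by
      simp only [hA, Set.mem_setOf_eq]
      linarith
    have := hfA _ h1
    rw [hsplit] at this
    nlinarith
  -- upper bound along the strict epigraph, then take limits
  have hkey : ∀ φ : Fin d → ℝ, F φ + ℓ φ * c ≤ F θhat + ℓ θhat * c := by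
    intro φ
    have hlt : ∀ ε > 0, F φ + ℓ φ * c < (F θhat + ℓ θhat * c) + ε := by
      intro ε hε
      have hmem : ((φ, ℓ φ + ε / (-c)) : (Fin d → ℝ) × ℝ) ∈ A := by
        simp only [hA, Set.mem_setOf_eq]
        have : 0 < ε / (-c) := div_pos hε (by linarith)
        linarith
      have := lt_of_lt_of_le (hfA _ hmem) hu
      rw [hsplit] at this
      have hc0 : -c ≠ 0 := by linarith
      have hrw : (ℓ φ + ε / (-c)) * c = ℓ φ * c - ε := by
        field_simp
        rw [mul_add, mul_neg, mul_div_assoc', mul_div_cancel_left₀ ε (neg_ne_zero.mp hc0)]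
        ring
      rw [hrw] at this
      linarith
    exact le_of_forall_pos_lt_add hlt
  refine ⟨fun j => F (Pi.single j (1 : ℝ)) / (-c), ?_, ?_⟩
  · -- vanishing on S, since B contains lines in those directions
    intro j hj
    have hline : ∀ s : ℝ, u ≤ F θhat + s * F (Pi.single j (1 : ℝ)) + ℓ θhat * c := by
      intro s
      have hmem : ((θhat + s • (Pi.single j (1 : ℝ) : Fin d → ℝ), ℓ θhat) : (Fin d → ℝ) × ℝ) ∈ B := by
        refine ⟨fun i hi => ?_, rfl⟩
        have hij : i ≠ j := fun h => hi (h ▸ hj)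
        simp [hzero i hi, Pi.single_apply, hij]
      have := hfB _ hmem
      rw [hsplit, map_add, F.map_smul, smul_eq_mul] at this
      linarith
    by_contra hne
    have hne' : F (Pi.single j (1 : ℝ)) ≠ 0 := by
      intro h
      exact hne (by simp [h])
    set s₀ : ℝ := (u - 1 - F θhat - ℓ θhat * c) / F (Pi.single j (1 : ℝ)) with hs₀
    have := hline s₀
    rw [hs₀, div_mul_cancel₀ _ hne'] at this
    linarith
  · -- subgradient inequality
    intro φ
    have hFdot : (fun j => F (Pi.single j (1 : ℝ)) / (-c)) ⬝ᵥ (φ - θhat)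
        = F (φ - θhat) / (-c) := by
      have hexp : ∀ v : Fin d → ℝ, F v = ∑ j, v j * F (Pi.single j (1 : ℝ)) := by
        intro v
        have hv : v = ∑ j, v j • (Pi.single j (1 : ℝ) : Fin d → ℝ) := by
          ext i
          simp [Pi.single_apply, Finset.sum_apply]
        nth_rewrite 1 [hv]
        rw [map_sum]
        simp [smul_eq_mul]
      rw [hexp]
      simp only [dotProduct]
      rw [Finset.sum_div]
      congr 1
      ext j
      rw [div_mul_eq_mul_div, mul_comm]
    rw [hFdot, map_sub]
    have hcpos : 0 < -c := by linarith
    have h2 : (F φ - F θhat) / (-c) ≤ ℓ φ - ℓ θhat := by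
      rw [div_le_iff₀ hcpos]
      nlinarith [hkey φ]
    linarith

/-- Zero-coordinate subgradient argument: if `θ̂` minimizes a convex `ℓ` over the
subspace of vectors vanishing outside `S`, and every subgradient of `ℓ` at `θ̂` has
coordinates outside `S` bounded by `λ` in absolute value, then `θ̂` is a local
minimizer of `θ ↦ ℓ(θ) + λ Σ_{j∈Sᶜ} |θ_j|`. -/
theorem zero_coordinate_subgradient_local_min
    (d : ℕ) (ℓ : (Fin d → ℝ) → ℝ) (hconv : ConvexOn ℝ Set.univ ℓ)
    (S : Finset (Fin d)) (lam : ℝ) (hlam : 0 < lam)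
    (θhat : Fin d → ℝ)
    (hzero : ∀ j ∉ S, θhat j = 0)
    (hmin : ∀ θ : Fin d → ℝ, (∀ j ∉ S, θ j = 0) → ℓ θhat ≤ ℓ θ)
    (hsub : ∀ g : Fin d → ℝ,
      (∀ φ : Fin d → ℝ, ℓ θhat + g ⬝ᵥ (φ - θhat) ≤ ℓ φ) → ∀ j ∉ S, |g j| ≤ lam) :
    IsLocalMin (fun θ => ℓ θ + lam * ∑ j ∈ Sᶜ, |θ j|) θhat := by
  obtain ⟨g, hgS, hgsub⟩ :=
    exists_subgradient_vanishing_on d ℓ hconv S θhat hzero hmin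
  have hbound : ∀ j ∉ S, |g j| ≤ lam := hsub g hgsub
  -- global minimum
  have hglobal : ∀ θ : Fin d → ℝ,
      ℓ θhat + lam * ∑ j ∈ Sᶜ, |θhat j| ≤ ℓ θ + lam * ∑ j ∈ Sᶜ, |θ j| := by
    intro θ
    have hpen0 : ∑ j ∈ Sᶜ, |θhat j| = 0 := by
      apply Finset.sum_eq_zero
      intro j hj
      rw [Finset.mem_compl] at hj
      simp [hzero j hj]
    have hdot : g ⬝ᵥ (θ - θhat) = ∑ j ∈ Sᶜ, g j * θ j := by
      simp only [dotProduct]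
      rw [← Finset.sum_add_sum_compl S]
      have h1 : ∑ j ∈ S, g j * (θ - θhat) j = 0 :=
        Finset.sum_eq_zero fun j hj => by simp [hgS j hj]
      have h2 : ∑ j ∈ Sᶜ, g j * (θ - θhat) j = ∑ j ∈ Sᶜ, g j * θ j := by
        apply Finset.sum_congr rfl
        intro j hj
        rw [Finset.mem_compl] at hj
        simp [hzero j hj]
      rw [h1, h2, zero_add]
    have hsg := hgsub θ
    rw [hdot] at hsg
    have hterm : 0 ≤ ∑ j ∈ Sᶜ, g j * θ j + lam * ∑ j ∈ Sᶜ, |θ j| := by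
      rw [Finset.mul_sum, ← Finset.sum_add_distrib]
      apply Finset.sum_nonneg
      intro j hj
      rw [Finset.mem_compl] at hj
      have h1 : |g j * θ j| ≤ lam * |θ j| := by
        rw [abs_mul]
        exact mul_le_mul_of_nonneg_right (hbound j hj) (abs_nonneg _)
      have h2 : -(g j * θ j) ≤ lam * |θ j| := (neg_le_abs _).trans h1
      linarith
    rw [hpen0]
    linarith
  exact Filter.Eventually.of_forall hglobal
end
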